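/- Let (X, 𝓑) be a simple (2^n − 1, 2^(n−1), 2^(n−2))-BIBD (with n ≥ 2) whose number of blocks equals its number of points. Then the rank over 𝔽₂ of its incidence matrix is at least n. -/

import Mathlib

/-- `(X, 𝓑)` is a simple `(v, k, λ)`-BIBD: `X` has `v` points, every block has
exactly `k` points, every pair of distinct points lies in exactly `λ` blocks,
and `v > k ≥ 2`. -/
def IsBIBD (X : Type*) [Fintype X] [DecidableEq X]
    (𝓑 : Finset (Finset X)) (v k l : ℕ) : Prop :=
  Fintype.card X = v ∧
  (∀ B ∈ 𝓑, B.card = k) ∧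
  (∀ x y : X, x ≠ y → (𝓑.filter fun B => x ∈ B ∧ y ∈ B).card = l) ∧
  k < v ∧ 2 ≤ k

/-- The incidence matrix of the design `(X, 𝓑)` over `𝔽₂ = ZMod 2`:
rows are indexed by points, columns by blocks, with entry `1` iff
the point belongs to the block. -/
def incidenceMatrix (X : Type*) [DecidableEq X]
    (𝓑 : Finset (Finset X)) : Matrix X {B // B ∈ 𝓑} (ZMod 2) :=
  fun x B => if x ∈ B.1 then 1 else 0

theorem stmt_8 {X : Type*} [Fintype X] [DecidableEq X]
    (𝓑 : Finset (Finset X)) (n : ℕ) (hn : 2 ≤ n)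
    (hBIBD : IsBIBD X 𝓑 (2 ^ n - 1) (2 ^ (n - 1)) (2 ^ (n - 2)))
    (hsymm : 𝓑.card = Fintype.card X) :
    n ≤ (incidenceMatrix X 𝓑).rank := by
  set M := incidenceMatrix X 𝓑 with hM
  set R := LinearMap.range M.mulVecLin with hR
  -- each column lies in the range
  have hcol : ∀ j : {B // B ∈ 𝓑}, (fun i => M i j) ∈ R := by
    intro j
    refine ⟨Pi.single j 1, ?_⟩
    simp [Matrix.mulVecLin_apply, Matrix.mulVec_single]
    rfl
  -- injection from blocks into the range
  have hinj : Function.Injective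
      (fun j : {B // B ∈ 𝓑} => (⟨fun i => M i j, hcol j⟩ : R)) := by
    intro j₁ j₂ h
    have h' : ∀ i, M i j₁ = M i j₂ := fun i => congrFun (congrArg Subtype.val h) i
    ext x
    have := h' x
    simp only [hM, incidenceMatrix] at this
    by_cases h1 : x ∈ j₁.1 <;> by_cases h2 : x ∈ j₂.1 <;> simp_all
  have hcard : Fintype.card {B // B ∈ 𝓑} ≤ Fintype.card R :=
    Fintype.card_le_of_injective _ hinj
  have hrange : Fintype.card R = 2 ^ M.rank := by
    have := Module.card_eq_pow_finrank (K := ZMod 2) (V := R)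
    simpa [ZMod.card, Matrix.rank] using this
  have h1 : 𝓑.card = 2 ^ n - 1 := by rw [hsymm, hBIBD.1]
  have h2 : Fintype.card {B // B ∈ 𝓑} = 2 ^ n - 1 := by
    rw [Fintype.card_coe, h1]
  by_contra hlt
  push_neg at hlt
  have hrk : M.rank ≤ n - 1 := by omega
  have hle : (2:ℕ) ^ M.rank ≤ 2 ^ (n - 1) := Nat.pow_le_pow_right (by norm_num) hrk
  have hpow : 2 ^ n = 2 * 2 ^ (n - 1) := by
    rw [← pow_succ']
    congr 1
    omega
  have h2n : (2:ℕ) ^ (n-1) ≥ 2 := by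
    calc (2:ℕ) ^ (n-1) ≥ 2 ^ 1 := Nat.pow_le_pow_right (by norm_num) (by omega)
    _ = 2 := by norm_num
  omega
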